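/- Let K be a field of characteristic 2 and A = K[x^{±1}, y^{±1}]. The Jacobian ring Jac(W) of W = x + y + x⁻¹y⁻¹, i.e. the quotient of A by the ideal generated by 1 + x⁻²y⁻¹ and 1 + x⁻¹y⁻², is isomorphic as a K-algebra to K[X]/(X³ − 1), via the map induced by sending both x and y to the class of X. -/

import Mathlib

set_option maxHeartbeats 1000000
noncomputable section

/-- The Laurent polynomial ring `K[x^{±1}, y^{±1}]`. -/
abbrev LaurentTwo (K : Type*) [Field K] := AddMonoidAlgebra K (ℤ × ℤ)

/-- The monomial `x^i y^j` in `K[x^{±1}, y^{±1}]`. -/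
def mon (K : Type*) [Field K] (i j : ℤ) : LaurentTwo K := AddMonoidAlgebra.single (i, j) 1

/-- The Jacobian ideal of `W = x + y + x⁻¹y⁻¹`, generated by the formal partial
derivatives `∂W/∂x = 1 + x⁻²y⁻¹` and `∂W/∂y = 1 + x⁻¹y⁻²` (signs are irrelevant in
characteristic 2). -/
def jacIdeal (K : Type*) [Field K] : Ideal (LaurentTwo K) :=
  Ideal.span {1 + mon K (-2) (-1), 1 + mon K (-1) (-2)}

section Aux

variable (K : Type*) [Field K]

lemma mon_mul (a b c d : ℤ) : mon K a b * mon K c d = mon K (a + c) (b + d) := by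
  rw [mon, mon, mon, AddMonoidAlgebra.single_mul_single, one_mul]
  rfl

lemma mon_zero_zero : mon K 0 0 = 1 := rfl

variable [CharP K 2]

lemma two_eq_zero (S : Type*) [Ring S] [Algebra K S] : (2 : S) = 0 := by
  have hK : (2 : K) = 0 := by
    have := CharP.cast_eq_zero K 2
    exact_mod_cast this
  rw [← map_ofNat (algebraMap K S) 2, hK, map_zero]

lemma g1_mem : 1 + mon K (-2) (-1) ∈ jacIdeal K :=
  Ideal.subset_span (Or.inl rfl)

lemma g2_mem : 1 + mon K (-1) (-2) ∈ jacIdeal K :=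
  Ideal.subset_span (Or.inr rfl)

lemma sub_one_mem_g1 : mon K (-2) (-1) - 1 ∈ jacIdeal K := by
  have h2 : (2 : LaurentTwo K) = 0 := two_eq_zero K _
  have : mon K (-2) (-1) - 1 = 1 + mon K (-2) (-1) := by linear_combination -h2
  rw [this]; exact g1_mem K

lemma sub_one_mem_g2 : mon K (-1) (-2) - 1 ∈ jacIdeal K := by
  have h2 : (2 : LaurentTwo K) = 0 := two_eq_zero K _
  have : mon K (-1) (-2) - 1 = 1 + mon K (-1) (-2) := by linear_combination -h2
  rw [this]; exact g2_mem K

lemma x3_sub_one_mem : mon K 3 0 - 1 ∈ jacIdeal K := by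
  have h2 : (2 : LaurentTwo K) = 0 := two_eq_zero K _
  have key : mon K 3 0 - 1 =
      (mon K 4 2 + mon K 2 1) * (1 + mon K (-2) (-1)) + mon K 4 2 * (1 + mon K (-1) (-2)) := by
    simp only [mul_add, mul_one, add_mul, mon_mul]
    norm_num [mon_zero_zero]
    linear_combination (-(1 : LaurentTwo K) - mon K 4 2 - mon K 2 1) * h2
  rw [key]
  exact add_mem (Ideal.mul_mem_left _ _ (g1_mem K)) (Ideal.mul_mem_left _ _ (g2_mem K))

/-- The monomials as units of the Laurent polynomial ring. -/
def monUnit (p : ℤ × ℤ) : (LaurentTwo K)ˣ where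
  val := mon K p.1 p.2
  inv := mon K (-p.1) (-p.2)
  val_inv := by rw [mon_mul]; simp [mon_zero_zero]
  inv_val := by rw [mon_mul]; simp [mon_zero_zero]

/-- The monomial units, as a monoid hom. -/
def baseHom : Multiplicative (ℤ × ℤ) →* (LaurentTwo K)ˣ where
  toFun p := monUnit K p.toAdd
  map_one' := Units.ext (mon_zero_zero K)
  map_mul' p q := Units.ext (by
    show mon K _ _ = mon K _ _ * mon K _ _
    rw [mon_mul]
    simp [toAdd_mul])

/-- The images of the monomial units in the Jacobian ring, as a monoid hom. -/
def qHom : Multiplicative (ℤ × ℤ) →* ((LaurentTwo K) ⧸ jacIdeal K)ˣ :=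
  (Units.map (Ideal.Quotient.mk (jacIdeal K)).toMonoidHom).comp (baseHom K)

lemma qHom_val (p : ℤ × ℤ) :
    (qHom K (Multiplicative.ofAdd p) : (LaurentTwo K) ⧸ jacIdeal K) =
      Ideal.Quotient.mk (jacIdeal K) (mon K p.1 p.2) := rfl

lemma qHom_g1 : qHom K (Multiplicative.ofAdd ((-2 : ℤ), (-1 : ℤ))) = 1 := by
  apply Units.ext
  rw [qHom_val, Units.val_one]
  rw [show (1 : (LaurentTwo K) ⧸ jacIdeal K) = Ideal.Quotient.mk (jacIdeal K) 1 from rfl]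
  rw [Ideal.Quotient.eq]
  exact sub_one_mem_g1 K

lemma qHom_g2 : qHom K (Multiplicative.ofAdd ((-1 : ℤ), (-2 : ℤ))) = 1 := by
  apply Units.ext
  rw [qHom_val, Units.val_one]
  rw [show (1 : (LaurentTwo K) ⧸ jacIdeal K) = Ideal.Quotient.mk (jacIdeal K) 1 from rfl]
  rw [Ideal.Quotient.eq]
  exact sub_one_mem_g2 K

lemma qHom_m11 : qHom K (Multiplicative.ofAdd ((-1 : ℤ), (1 : ℤ))) = 1 := by
  have h12 : qHom K (Multiplicative.ofAdd ((1 : ℤ), (2 : ℤ))) = 1 := by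
    have h := map_inv (qHom K) (Multiplicative.ofAdd ((-1 : ℤ), (-2 : ℤ)))
    rw [qHom_g2 K, inv_one, ← ofAdd_neg] at h
    norm_num [Prod.neg_mk] at h
    exact h
  have key : (Multiplicative.ofAdd ((-1 : ℤ), (1 : ℤ))) =
      Multiplicative.ofAdd ((-2 : ℤ), (-1 : ℤ)) * Multiplicative.ofAdd ((1 : ℤ), (2 : ℤ)) := by
    rw [← ofAdd_add]
    norm_num [Prod.mk_add_mk]
  rw [key, map_mul, qHom_g1, h12, one_mul]

lemma qHom_eq_pow (i j : ℤ) :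
    qHom K (Multiplicative.ofAdd (i, j)) =
      (qHom K (Multiplicative.ofAdd ((1 : ℤ), (0 : ℤ)))) ^ (i + j) := by
  have hdecomp : (i, j) = (i + j) • ((1 : ℤ), (0 : ℤ)) + j • ((-1 : ℤ), (1 : ℤ)) := by
    simp only [Prod.smul_mk, smul_eq_mul, Prod.mk_add_mk, Prod.mk.injEq]
    constructor <;> ring
  calc qHom K (Multiplicative.ofAdd (i, j))
      = qHom K ((Multiplicative.ofAdd ((1 : ℤ), (0 : ℤ))) ^ (i + j) *
          (Multiplicative.ofAdd ((-1 : ℤ), (1 : ℤ))) ^ j) := by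
        rw [← ofAdd_zsmul, ← ofAdd_zsmul, ← ofAdd_add, ← hdecomp]
    _ = (qHom K (Multiplicative.ofAdd ((1 : ℤ), (0 : ℤ)))) ^ (i + j) := by
        rw [map_mul, map_zpow, map_zpow, qHom_m11, one_zpow, mul_one]

lemma qHom_cube :
    (qHom K (Multiplicative.ofAdd ((1 : ℤ), (0 : ℤ)))) ^ (3 : ℤ) = 1 := by
  have h := qHom_eq_pow K 3 0
  norm_num at h
  rw [show (qHom K (Multiplicative.ofAdd ((1 : ℤ), (0 : ℤ)))) ^ (3 : ℤ) =
      qHom K (Multiplicative.ofAdd ((3 : ℤ), (0 : ℤ))) from by rw [qHom_eq_pow K 3 0]; norm_num]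
  apply Units.ext
  rw [qHom_val, Units.val_one]
  rw [show (1 : (LaurentTwo K) ⧸ jacIdeal K) = Ideal.Quotient.mk (jacIdeal K) 1 from rfl]
  rw [Ideal.Quotient.eq]
  exact x3_sub_one_mem K

end Aux

/-- `Jac(W) ≅ K[X]/(X³ − 1)` as `K`-algebras, via the map sending
both `x` and `y` to the class of `X`. -/
theorem jac_iso (K : Type*) [Field K] [CharP K 2] :
    ∃ e : (LaurentTwo K ⧸ jacIdeal K) ≃ₐ[K]
        (Polynomial K ⧸ Ideal.span {(Polynomial.X : Polynomial K) ^ 3 - 1}),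
      e (Ideal.Quotient.mk (jacIdeal K) (mon K 1 0)) =
        Ideal.Quotient.mk (Ideal.span {(Polynomial.X : Polynomial K) ^ 3 - 1}) Polynomial.X ∧
      e (Ideal.Quotient.mk (jacIdeal K) (mon K 0 1)) =
        Ideal.Quotient.mk (Ideal.span {(Polynomial.X : Polynomial K) ^ 3 - 1}) Polynomial.X := by
  classical
  set I : Ideal (Polynomial K) := Ideal.span {(Polynomial.X : Polynomial K) ^ 3 - 1} with hI
  set t : Polynomial K ⧸ I := Ideal.Quotient.mk I Polynomial.X with ht
  -- t³ = 1
  have ht3 : t ^ 3 = 1 := by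
    rw [ht, ← map_pow, show (1 : Polynomial K ⧸ I) = Ideal.Quotient.mk I 1 from rfl,
      Ideal.Quotient.eq]
    exact Ideal.subset_span rfl
  -- t as a unit
  set T : (Polynomial K ⧸ I)ˣ :=
    ⟨t, t ^ 2, by rw [← pow_succ']; exact ht3, by rw [← pow_succ]; exact ht3⟩ with hT
  have hT3 : T ^ 3 = 1 := Units.ext (by simpa using ht3)
  -- the monoid hom (i,j) ↦ T^(i+j)
  set M : Multiplicative (ℤ × ℤ) →* (Polynomial K ⧸ I) :=
    (Units.coeHom _).comp ((zpowersHom _ T).comp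
      (AddMonoidHom.toMultiplicative (AddMonoidHom.fst ℤ ℤ + AddMonoidHom.snd ℤ ℤ))) with hM
  have hMval : ∀ p : ℤ × ℤ, M (Multiplicative.ofAdd p) = ((T ^ (p.1 + p.2) : _ˣ) :
      Polynomial K ⧸ I) := by
    intro p
    rw [hM]
    simp
  -- the forward algebra hom from the Laurent ring
  set γ₀ : LaurentTwo K →ₐ[K] Polynomial K ⧸ I := AddMonoidAlgebra.lift K _ (ℤ × ℤ) M with hγ₀
  have hγ₀mon : ∀ i j : ℤ, γ₀ (mon K i j) = ((T ^ (i + j) : _ˣ) : Polynomial K ⧸ I) := by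
    intro i j
    rw [hγ₀, mon, AddMonoidAlgebra.lift_single, hMval (i, j)]
    simp
  have h2R : (2 : Polynomial K ⧸ I) = 0 := two_eq_zero K _
  have hker : ∀ a ∈ jacIdeal K, γ₀ a = 0 := by
    intro a ha
    have hle : jacIdeal K ≤ RingHom.ker γ₀ := by
      rw [jacIdeal, Ideal.span_le]
      rintro g (rfl | rfl) <;>
      · rw [SetLike.mem_coe, RingHom.mem_ker, map_add, map_one, hγ₀mon]
        have hT3' : T ^ (3 : ℤ) = 1 := by exact_mod_cast hT3
        norm_num [hT3, hT3']
        linear_combination h2R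
    exact hle ha
  set γ : (LaurentTwo K ⧸ jacIdeal K) →ₐ[K] Polynomial K ⧸ I :=
    Ideal.Quotient.liftₐ (jacIdeal K) γ₀ hker with hγ
  have hγmk : ∀ a, γ (Ideal.Quotient.mk (jacIdeal K) a) = γ₀ a := fun a => by
    rw [hγ, Ideal.Quotient.liftₐ_apply]
    rfl
  -- the backward algebra hom
  set u : LaurentTwo K ⧸ jacIdeal K := Ideal.Quotient.mk (jacIdeal K) (mon K 1 0) with hu
  have hu_unit : u = ((qHom K (Multiplicative.ofAdd ((1 : ℤ), (0 : ℤ)))) :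
      (LaurentTwo K ⧸ jacIdeal K)ˣ) := rfl
  have hu3 : u ^ 3 = 1 := by
    have h : (qHom K (Multiplicative.ofAdd ((1 : ℤ), (0 : ℤ)))) ^ (3 : ℕ) = 1 := by
      exact_mod_cast qHom_cube K
    rw [hu_unit, ← Units.val_pow_eq_pow_val, h, Units.val_one]
  set β₀ : Polynomial K →ₐ[K] (LaurentTwo K ⧸ jacIdeal K) := Polynomial.aeval u with hβ₀
  have hβker : ∀ a ∈ I, β₀ a = 0 := by
    intro a ha
    rw [hI, Ideal.mem_span_singleton] at ha
    obtain ⟨c, rfl⟩ := ha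
    rw [map_mul, map_sub, map_pow, map_one, hβ₀, Polynomial.aeval_X, hu3, sub_self, zero_mul]
  set β : (Polynomial K ⧸ I) →ₐ[K] (LaurentTwo K ⧸ jacIdeal K) :=
    Ideal.Quotient.liftₐ I β₀ hβker with hβ
  have hβmk : ∀ a, β (Ideal.Quotient.mk I a) = β₀ a := fun a => by
    rw [hβ, Ideal.Quotient.liftₐ_apply]
    rfl
  have hβt : β t = u := by rw [ht, hβmk, hβ₀, Polynomial.aeval_X]
  -- γ ∘ β = id
  have hγβ : ∀ r, γ (β r) = r := by
    have : (γ.comp β).comp (Ideal.Quotient.mkₐ K I) =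
        (AlgHom.id K _).comp (Ideal.Quotient.mkₐ K I) := by
      apply Polynomial.algHom_ext
      show γ (β (Ideal.Quotient.mk I Polynomial.X)) = Ideal.Quotient.mk I Polynomial.X
      rw [← ht, hβt, hu, hγmk, hγ₀mon]
      norm_num [ht]
      rfl
    have h2 : γ.comp β = AlgHom.id K _ := by
      apply Ideal.Quotient.algHom_ext
      exact this
    intro r
    exact AlgHom.congr_fun h2 r
  -- β is surjective
  have hβsurj : Function.Surjective β := by
    intro q
    obtain ⟨a, rfl⟩ := Ideal.Quotient.mk_surjective q
    suffices h : Ideal.Quotient.mk (jacIdeal K) a ∈ β.range by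
      obtain ⟨r, hr⟩ := h; exact ⟨r, hr⟩
    induction a using AddMonoidAlgebra.induction with
    | zero => rw [map_zero]; exact zero_mem _
    | single_add p c f _ _ ih =>
      rw [map_add]
      refine add_mem ?_ ih
      -- single p c = c • mon p.1 p.2
      have hsingle : (AddMonoidAlgebra.single p c : LaurentTwo K) = c • mon K p.1 p.2 := by
        rw [mon]
        rw [AddMonoidAlgebra.smul_single', mul_one]
      have hmksmul : Ideal.Quotient.mk (jacIdeal K) (c • mon K p.1 p.2) =
          c • Ideal.Quotient.mk (jacIdeal K) (mon K p.1 p.2) :=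
        map_smul (Ideal.Quotient.mkₐ K (jacIdeal K)) c _
      rw [hsingle, hmksmul]
      refine Subalgebra.smul_mem _ ?_ _
      -- mon p.1 p.2 maps to u^(p.1+p.2)
      have hmonpow : Ideal.Quotient.mk (jacIdeal K) (mon K p.1 p.2) =
          (((qHom K (Multiplicative.ofAdd ((1 : ℤ), (0 : ℤ)))) ^ (p.1 + p.2) : _ˣ) :
            (LaurentTwo K ⧸ jacIdeal K)) := by
        rw [← qHom_val, qHom_eq_pow]
      rw [hmonpow]
      set U := qHom K (Multiplicative.ofAdd ((1 : ℤ), (0 : ℤ))) with hU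
      have hU3 : U ^ (3 : ℤ) = 1 := qHom_cube K
      have hUinv : U⁻¹ = U ^ 2 := by
        rw [inv_eq_iff_mul_eq_one, ← pow_succ']
        have : U ^ 3 = 1 := by exact_mod_cast hU3
        exact this
      have hUrange : (U : LaurentTwo K ⧸ jacIdeal K) ∈ β.range := by
        refine ⟨t, ?_⟩
        show β t = _
        rw [hβt, hu_unit]
      rcases p.1 + p.2 with m | m
      · rw [Int.ofNat_eq_coe, zpow_natCast, Units.val_pow_eq_pow_val]
        exact pow_mem hUrange m
      · rw [zpow_negSucc, ← inv_pow, hUinv, ← pow_mul, Units.val_pow_eq_pow_val]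
        exact pow_mem hUrange _
  -- γ is bijective
  have hγsurj : Function.Surjective γ := fun r => ⟨β r, hγβ r⟩
  have hγinj : Function.Injective γ := by
    intro a b hab
    obtain ⟨a', rfl⟩ := hβsurj a
    obtain ⟨b', rfl⟩ := hβsurj b
    rw [hγβ, hγβ] at hab
    rw [hab]
  refine ⟨AlgEquiv.ofBijective γ ⟨hγinj, hγsurj⟩, ?_, ?_⟩
  · show γ (Ideal.Quotient.mk (jacIdeal K) (mon K 1 0)) = Ideal.Quotient.mk I Polynomial.X
    rw [hγmk, hγ₀mon]
    norm_num [ht]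
    rfl
  · show γ (Ideal.Quotient.mk (jacIdeal K) (mon K 0 1)) = Ideal.Quotient.mk I Polynomial.X
    rw [hγmk, hγ₀mon]
    norm_num [ht]
    rfl

end
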